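/- The program of Listing 2 is safe but not aperiodic: letting P₂ = prog(y){ x := true; while(x){ y := y−1; x := declass(y > 0) } return y }, where y holds a binary number and −1 is binary decrement, P₂ is Δsafe for the variable typing environment Γ with Γ(x) = 1 and Γ(y) = 0 and a suitable safe operator typing environment Δ, but P₂ is not aperiodic: there is an input store for which the loop guard x is evaluated under two e-equivalent stores, one within the evaluation subtree of the other. -/

import Mathlib

namespace Declass

/-! ### Words over a finite alphabet -/

/-- Words over the alphabet `σ`. -/
abbrev Word (σ : Type) := List σ

/-- An operator signature: a set of operators, each with an arity and a total semantics. -/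
structure OpSig (σ : Type) where
  Op : Type
  ar : Op → ℕ
  sem : (o : Op) → (Fin (ar o) → Word σ) → Word σ

variable {σ : Type}

/-! ### Syntax -/

/-- Expressions of the first-order imperative language. -/
inductive Expr (O : OpSig σ) : Type where
  | var : ℕ → Expr O
  | op : (o : O.Op) → (Fin (O.ar o) → Expr O) → Expr O
  | declass : Expr O → Expr O

/-- Statements of the first-order imperative language. -/
inductive Stmt (O : OpSig σ) : Type where
  | skip : Stmt O
  | assign : ℕ → Expr O → Stmt O
  | seq : Stmt O → Stmt O → Stmt O
  | ite : Expr O → Stmt O → Stmt O → Stmt O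
  | whileLoop : Expr O → Stmt O → Stmt O
  | brk : Expr O → Stmt O

/-- A program `prog(x̄){s return x}`. -/
structure Prog (O : OpSig σ) where
  arity : ℕ
  params : Fin arity → ℕ
  body : Stmt O
  ret : ℕ

/-! ### Semantics -/

/-- A memory store: a total map from variables to words. -/
abbrev Store (σ : Type) := ℕ → Word σ

variable {O : OpSig σ}

/-- The initial store `μ∅[x̄ ← w̄]`. -/
def initStore (P : Prog O) (ws : Fin P.arity → Word σ) : Store σ :=
  (List.ofFn fun i => (P.params i, ws i)).foldl
    (fun μ p => Function.update μ p.1 p.2) (fun _ => ([] : Word σ))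

/-- Big-step semantics of expressions; `one` is the letter `1`, the word `[one]`
is the boolean `true`, and the one-argument declassification `declass(e)`
evaluates to `1^(|w|)`. -/
inductive EvalE (one : σ) : Store σ → Expr O → Word σ → Prop where
  | var : ∀ (μ : Store σ) (x : ℕ), EvalE one μ (.var x) (μ x)
  | op : ∀ (μ : Store σ) (o : O.Op) (es : Fin (O.ar o) → Expr O) (ws : Fin (O.ar o) → Word σ),
      (∀ i, EvalE one μ (es i) (ws i)) → EvalE one μ (.op o es) (O.sem o ws)
  | declass : ∀ (μ : Store σ) (e : Expr O) (w : Word σ),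
      EvalE one μ e w → EvalE one μ (.declass e) (List.replicate w.length one)

/-- Big-step semantics of statements. The boolean flag is `true` for `⊤` (normal
termination) and `false` for `⊥` (a break aborted the control flow). -/
inductive EvalS (one : σ) : Store σ → Stmt O → Bool × Store σ → Prop where
  | skip : ∀ μ : Store σ, EvalS one μ .skip (true, μ)
  | assign : ∀ (μ : Store σ) (x : ℕ) (e : Expr O) (w : Word σ), EvalE one μ e w →
      EvalS one μ (.assign x e) (true, Function.update μ x w)
  | seq_top : ∀ (μ μ' : Store σ) (r : Bool × Store σ) (s₁ s₂ : Stmt O),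
      EvalS one μ s₁ (true, μ') → EvalS one μ' s₂ r → EvalS one μ (.seq s₁ s₂) r
  | seq_brk : ∀ (μ μ' : Store σ) (s₁ s₂ : Stmt O),
      EvalS one μ s₁ (false, μ') → EvalS one μ (.seq s₁ s₂) (false, μ')
  | ite_true : ∀ (μ : Store σ) (e : Expr O) (s₁ s₀ : Stmt O) (r : Bool × Store σ),
      EvalE one μ e [one] → EvalS one μ s₁ r → EvalS one μ (.ite e s₁ s₀) r
  | ite_false : ∀ (μ : Store σ) (e : Expr O) (s₁ s₀ : Stmt O) (w : Word σ) (r : Bool × Store σ),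
      EvalE one μ e w → w ≠ [one] → EvalS one μ s₀ r → EvalS one μ (.ite e s₁ s₀) r
  | while_false : ∀ (μ : Store σ) (e : Expr O) (s : Stmt O) (w : Word σ),
      EvalE one μ e w → w ≠ [one] → EvalS one μ (.whileLoop e s) (true, μ)
  | while_true : ∀ (μ μ' : Store σ) (e : Expr O) (s : Stmt O) (b : Bool),
      EvalE one μ e [one] → EvalS one μ (.seq s (.whileLoop e s)) (b, μ') →
      EvalS one μ (.whileLoop e s) (true, μ')
  | brk_false : ∀ (μ : Store σ) (e : Expr O) (w : Word σ),
      EvalE one μ e w → w ≠ [one] → EvalS one μ (.brk e) (true, μ)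
  | brk_true : ∀ (μ : Store σ) (e : Expr O),
      EvalE one μ e [one] → EvalS one μ (.brk e) (false, μ)

/-- `⟦P⟧(w̄) = v`. -/
def Prog.Outputs (one : σ) (P : Prog O) (ws : Fin P.arity → Word σ) (v : Word σ) : Prop :=
  ∃ μ' : Store σ, EvalS one (initStore P ws) P.body (true, μ') ∧ μ' P.ret = v

/-- `P ∈ TERM`: the partial function `⟦P⟧` is total. -/
def Prog.Terminating (one : σ) (P : Prog O) : Prop :=
  ∀ ws : Fin P.arity → Word σ, ∃ v, P.Outputs one ws v

/-- The (partial) function `⟦P⟧` coincides with the total function `f`. -/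
def Prog.Computes (one : σ) (P : Prog O) (f : (Fin P.arity → Word σ) → Word σ) : Prop :=
  ∀ (ws : Fin P.arity → Word σ) (v : Word σ), P.Outputs one ws v ↔ v = f ws

/-! ### Operator classification -/

/-- `maxᵢ |wᵢ|`. -/
def maxSize {k : ℕ} (ws : Fin k → Word σ) : ℕ :=
  Finset.univ.sup fun i => (ws i).length

/-- A neutral operator: a predicate (into `{0,1}`) or a subword operation. -/
def NeutralOp (zero one : σ) (O : OpSig σ) (o : O.Op) : Prop :=
  (∀ ws, O.sem o ws = [zero] ∨ O.sem o ws = [one]) ∨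
  ∃ i : Fin (O.ar o), ∀ ws, (O.sem o ws) <:+: (ws i)

/-- A positive operator: `|⟦op⟧(w̄)| ≤ maxᵢ |wᵢ| + c`. -/
def PositiveOp (O : OpSig σ) (o : O.Op) : Prop :=
  ∃ c : ℕ, ∀ ws, (O.sem o ws).length ≤ maxSize ws + c

/-- A polynomial operator: `|⟦op⟧(w̄)| ≤ Q(maxᵢ |wᵢ|)`. -/
def PolyOp (O : OpSig σ) (o : O.Op) : Prop :=
  ∃ Q : Polynomial ℕ, ∀ ws, (O.sem o ws).length ≤ Q.eval (maxSize ws)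

/-! ### Polynomial-time computability (FP) -/

/-- The trivial encoding of words over `σ` as strings over `σ`. -/
def wordEncoding (σ : Type) [Fintype σ] : Computability.Encoding (Word σ) σ where
  encode := id
  decode := some
  decode_encode _ := rfl

/-- Encoding of tuples of words, using a fresh separator symbol. -/
def tupleEncoding (σ : Type) [Fintype σ] [DecidableEq σ] (n : ℕ) :
    Computability.Encoding (Fin n → Word σ) (Option σ) where
  encode ws := List.intercalate [none] (List.ofFn fun i => (ws i).map some)
  decode l :=
    if h0 : n = 0 then
      if l = [] then some (fun i => absurd i.2 (by omega)) else none
    else if h : (@List.splitOn _ instBEqOfDecidableEq none l).length = n then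
      some fun i => ((@List.splitOn _ instBEqOfDecidableEq none l).get (Fin.cast h.symm i)).reduceOption
    else none
  decode_encode ws := by
    by_cases h0 : n = 0
    · subst h0
      have henc : List.intercalate [none] (List.ofFn fun i : Fin 0 => (ws i).map some)
          = ([] : List (Option σ)) := by simp [List.intercalate]
      simp only [henc, dif_pos rfl, if_pos rfl]
      exact congrArg some (funext fun i => i.elim0)
    · have hsplit : (@List.splitOn _ instBEqOfDecidableEq none
            (List.intercalate [none] (List.ofFn fun i => (ws i).map some)))
          = List.ofFn fun i => (ws i).map some := by
        letI : BEq (Option σ) := instBEqOfDecidableEq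
        apply List.splitOn_intercalate
        · intro l hl
          simp only [List.mem_ofFn] at hl
          obtain ⟨i, rfl⟩ := hl
          simp
        · simp only [ne_eq, List.ofFn_eq_nil_iff]
          omega
      have hred : ∀ w : Word σ, (w.map some).reduceOption = w := by
        intro w
        induction w with
        | nil => rfl
        | cons a t ih => simpa [List.reduceOption_cons_of_some] using ih
      simp only [h0, dite_false, hsplit, List.length_ofFn, dite_true, dif_neg, dif_pos]
      congr 1
      funext i
      simp [hsplit, List.getElem_ofFn, hred]

/-- `f ∈ FP`: `f` is computable in polynomial time by a (deterministic) Turing machine. -/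
def InFP [Fintype σ] [DecidableEq σ] {n : ℕ} (f : (Fin n → Word σ) → Word σ) : Prop :=
  Nonempty (Turing.TM2ComputableInPolyTime (tupleEncoding σ n).encode (wordEncoding σ).encode f)

/-! ### The level-based type system -/

/-- An operator typing environment: `Δ(op)(τin, τout)` is a set of admissible
functional levels `τ₁ → … → τ_{ar(op)+1}` (viewed as tuples). -/
abbrev OpEnv (O : OpSig σ) := (o : O.Op) → ℕ → ℕ → Set (Fin (O.ar o + 1) → ℕ)

/-- Typing judgments for expressions: `Γ, Δ ⊢^{τin}_{τout} e : τ`. -/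
inductive TypE (Γ : ℕ → ℕ) (Δ : OpEnv O) : ℕ → ℕ → Expr O → ℕ → Prop where
  | var : ∀ (τin τout : ℕ) (x : ℕ), TypE Γ Δ τin τout (.var x) (Γ x)
  | op : ∀ (τin τout : ℕ) (o : O.Op) (es : Fin (O.ar o) → Expr O)
      (τs : Fin (O.ar o + 1) → ℕ), τs ∈ Δ o τin τout →
      (∀ i : Fin (O.ar o), TypE Γ Δ τin τout (es i) (τs i.castSucc)) →
      TypE Γ Δ τin τout (.op o es) (τs (Fin.last _))
  | declass : ∀ (τin τout : ℕ) (e : Expr O) (τ₁ τ : ℕ),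
      TypE Γ Δ τin τout e τ₁ →
      τ₁ ≤ τ → τ ≤ τout → TypE Γ Δ τin τout (.declass e) τ

/-- Typing judgments for statements: `Γ, Δ ⊢^{τin}_{τout} s : τ` (Figure 3). -/
inductive TypS (Γ : ℕ → ℕ) (Δ : OpEnv O) : ℕ → ℕ → Stmt O → ℕ → Prop where
  | sub : ∀ (τin τout : ℕ) (s : Stmt O) (τ₁ τ₂ : ℕ),
      TypS Γ Δ τin τout s τ₁ → τ₁ ≤ τ₂ → TypS Γ Δ τin τout s τ₂
  | skip : ∀ τin τout : ℕ, TypS Γ Δ τin τout .skip 0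
  | assign : ∀ (τin τout : ℕ) (x : ℕ) (e : Expr O) (τ₂ : ℕ),
      TypE Γ Δ τin τout e τ₂ → (τout = 0 ∨ Γ x ≤ τ₂) →
      TypS Γ Δ τin τout (.assign x e) (Γ x)
  | seq : ∀ (τin τout : ℕ) (s₁ s₂ : Stmt O) (τ : ℕ),
      TypS Γ Δ τin τout s₁ τ → TypS Γ Δ τin τout s₂ τ →
      TypS Γ Δ τin τout (.seq s₁ s₂) τ
  | cond : ∀ (τin τout : ℕ) (e : Expr O) (s₁ s₀ : Stmt O) (τ : ℕ),
      TypE Γ Δ τin τout e τ → TypS Γ Δ τin τout s₁ τ → TypS Γ Δ τin τout s₀ τ →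
      TypS Γ Δ τin τout (.ite e s₁ s₀) τ
  | whileNested : ∀ (τin τout : ℕ) (e : Expr O) (s : Stmt O) (τ : ℕ),
      TypE Γ Δ τ τout e τ → TypS Γ Δ τ τout s τ → 1 ≤ τ → τ ≤ τout →
      TypS Γ Δ τin τout (.whileLoop e s) τ
  | whileInit : ∀ (e : Expr O) (s : Stmt O) (τ : ℕ),
      TypE Γ Δ τ τ e τ → TypS Γ Δ τ τ s τ → 1 ≤ τ →
      TypS Γ Δ 0 0 (.whileLoop e s) τ
  | brk : ∀ (τin τout : ℕ) (e : Expr O) (τ : ℕ),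
      TypE Γ Δ τin τout e τ → τin ≤ τ → TypS Γ Δ τin τout (.brk e) τin

/-- A safe operator typing environment (Definition 2.2). -/
def SafeOpEnv [Fintype σ] [DecidableEq σ] (zero one : σ) (Δ : OpEnv O) : Prop :=
  ∀ o : O.Op,
    (NeutralOp zero one O o ∨ PositiveOp O o ∨ PolyOp O o) ∧
    InFP (O.sem o) ∧
    ∀ (τin τout : ℕ) (τs : Fin (O.ar o + 1) → ℕ), τs ∈ Δ o τin τout →
      (NeutralOp zero one O o →
        ∀ i : Fin (O.ar o), τs (Fin.last _) ≤ τs i.castSucc) ∧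
      ((PositiveOp O o ∧ ¬ NeutralOp zero one O o) →
        (∀ i : Fin (O.ar o), τs (Fin.last _) ≤ τs i.castSucc) ∧
        (τs (Fin.last _) < τin ∨ τs (Fin.last _) = 0)) ∧
      ((PolyOp O o ∧ ¬ PositiveOp O o) → τout = 0)

/-- `P ∈ ΔSAFE`. -/
def DeltaSafe (Δ : OpEnv O) (P : Prog O) : Prop :=
  ∃ (Γ : ℕ → ℕ) (τ : ℕ), TypS Γ Δ 0 0 P.body τ

/-- `P ∈ SAFE`. -/
def Safe [Fintype σ] [DecidableEq σ] (zero one : σ) (P : Prog O) : Prop :=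
  ∃ Δ : OpEnv O, SafeOpEnv zero one Δ ∧ DeltaSafe Δ P

/-! ### Aperiodicity -/

/-- The set `U(e)` of undeclassified variables of an expression. -/
def undecl : Expr O → Set ℕ
  | .var x => {x}
  | .op _ es => ⋃ i, undecl (es i)
  | .declass _ => ∅

/-- `μ ≡_e μ'`: the stores agree on all undeclassified variables of `e`. -/
def EquivOn (e : Expr O) (μ μ' : Store σ) : Prop :=
  ∀ x ∈ undecl e, μ x = μ' x

/-- One step of the subtree relation of the (possibly infinite) evaluation tree:
`SubConf one c c'` holds iff `π_{c'}` is an immediate (statement-)subtree of `π_c`. -/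
inductive SubConf (one : σ) : Store σ × Stmt O → Store σ × Stmt O → Prop where
  | seq_left : ∀ (μ : Store σ) (s₁ s₂ : Stmt O), SubConf one (μ, .seq s₁ s₂) (μ, s₁)
  | seq_right : ∀ (μ μ' : Store σ) (s₁ s₂ : Stmt O),
      EvalS one μ s₁ (true, μ') → SubConf one (μ, .seq s₁ s₂) (μ', s₂)
  | ite_true : ∀ (μ : Store σ) (e : Expr O) (s₁ s₀ : Stmt O),
      EvalE one μ e [one] → SubConf one (μ, .ite e s₁ s₀) (μ, s₁)
  | ite_false : ∀ (μ : Store σ) (e : Expr O) (s₁ s₀ : Stmt O) (w : Word σ),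
      EvalE one μ e w → w ≠ [one] → SubConf one (μ, .ite e s₁ s₀) (μ, s₀)
  | while_true : ∀ (μ : Store σ) (e : Expr O) (s : Stmt O),
      EvalE one μ e [one] →
      SubConf one (μ, .whileLoop e s) (μ, .seq s (.whileLoop e s))

/-- No while loop reachable from `(μ, s₀)` is ever evaluated twice (one occurrence
strictly inside the other) under `e`-equivalent stores. -/
def NoRepeat (one : σ) (s₀ : Stmt O) (μ : Store σ) : Prop :=
  ¬ ∃ (e : Expr O) (s : Stmt O) (μ' μ'' : Store σ),
      Relation.ReflTransGen (SubConf one) (μ, s₀) (μ', .whileLoop e s) ∧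
      Relation.TransGen (SubConf one) (μ', .whileLoop e s) (μ'', .whileLoop e s) ∧
      EquivOn e μ' μ''

/-- `P ∈ AP`: `P` is aperiodic. -/
def Aperiodic (one : σ) (P : Prog O) : Prop :=
  ∀ μ : Store σ, NoRepeat one P.body μ


/-! ### The program of Listing 2 -/

/-- Operators of Listing 2: the boolean constant `true`, binary decrement `−1`,
and the positivity test `> 0`. -/
inductive Op2 : Type where
  | trueC | decB | gt0B

/-- Arities. -/
def ar2 : Op2 → ℕ
  | .trueC => 0
  | _ => 1

/-- The number denoted by a binary numeral over `Bool` (`false = 0`, `true = 1`). -/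
def bval (w : Word Bool) : ℕ := w.foldl (fun n b => 2 * n + cond b 1 0) 0

/-- The canonical binary numeral of a natural number. -/
def btoW (n : ℕ) : Word Bool := (Nat.bits n).reverse

/-- Semantics: `−1` is binary decrement on binary numerals, and `>0` tests that
its argument denotes a positive number. -/
def sem2 : (o : Op2) → (Fin (ar2 o) → Word Bool) → Word Bool
  | .trueC, _ => [true]
  | .decB, ws => btoW (bval (ws ⟨0, by decide⟩) - 1)
  | .gt0B, ws => if 0 < bval (ws ⟨0, by decide⟩) then [true] else [false]

/-- The operator signature of Listing 2. -/
def sig2 : OpSig Bool where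
  Op := Op2
  ar := ar2
  sem := sem2

/-- Variables: `x = 0`, `y = 1`.  The body of Listing 2:
`x := true; while(x){ y := y−1; x := declass(y > 0) }`. -/
def expBody₂ : Stmt sig2 :=
  .seq (.assign 0 (.op .trueC ![])) <|
  .whileLoop (.var 0)
    (.seq (.assign 1 (.op .decB ![.var 1]))
          (.assign 0 (.declass (.op .gt0B ![.var 1]))))

/-- The program `P₂` of Listing 2 (input `y`, output `y`). -/
def P₂ : Prog sig2 where
  arity := 1
  params := ![1]
  body := expBody₂
  ret := 1

/-- The variable typing environment with `Γ(x) = 1` and `Γ(y) = 0`. -/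
def Γ₂ : ℕ → ℕ := fun v => if v = 0 then 1 else 0


/-! ### Auxiliary development for the proof -/

section Aux

/-! #### Binary arithmetic on words -/

/-- lsb-first value of a bit list. -/
def valL : List Bool → ℕ
  | [] => 0
  | b :: t => cond b 1 0 + 2 * valL t

lemma bval_aux (w : List Bool) : ∀ acc, w.foldl (fun n b => 2 * n + cond b 1 0) acc
    = acc * 2 ^ w.length + bval w := by
  induction w with
  | nil => intro acc; simp [bval]
  | cons b t ih =>
      intro acc
      have h1 : (b :: t).foldl (fun n b => 2 * n + cond b 1 0) acc
          = t.foldl (fun n b => 2 * n + cond b 1 0) (2 * acc + cond b 1 0) := rfl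
      have h2 : bval (b :: t) = t.foldl (fun n b => 2 * n + cond b 1 0) (2 * 0 + cond b 1 0) := rfl
      rw [h1, ih, h2, ih (2 * 0 + cond b 1 0)]
      simp [List.length_cons]
      ring

lemma bval_cons (b : Bool) (t : List Bool) :
    bval (b :: t) = cond b 1 0 * 2 ^ t.length + bval t := by
  have h2 : bval (b :: t) = t.foldl (fun n b => 2 * n + cond b 1 0) (2 * 0 + cond b 1 0) := rfl
  rw [h2, bval_aux]
  ring

lemma valL_append (l : List Bool) (b : Bool) :
    valL (l ++ [b]) = valL l + cond b 1 0 * 2 ^ l.length := by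
  induction l with
  | nil => simp [valL]
  | cons c t ih => simp [valL, ih, pow_succ]; ring

lemma bval_eq_valL_reverse (w : List Bool) : bval w = valL w.reverse := by
  induction w with
  | nil => rfl
  | cons b t ih =>
      rw [bval_cons, List.reverse_cons, valL_append, ih, List.length_reverse]; ring

lemma valL_append_true_pos (l : List Bool) : 0 < valL (l ++ [true]) := by
  rw [valL_append]; simp

lemma bitsL (l : List Bool) : Nat.bits (valL (l ++ [true])) = l ++ [true] := by
  induction l with
  | nil => simpa [valL] using Nat.one_bits
  | cons b t ih =>
      have h : valL ((b :: t) ++ [true]) = Nat.bit b (valL (t ++ [true])) := by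
        cases b <;> simp [valL, Nat.bit] <;> ring
      rw [h, Nat.bits_append_bit _ _ (fun h0 => absurd h0 (valL_append_true_pos t).ne'), ih]
      rfl

/-- lsb-first decrement with borrow. -/
def dec1 : List Bool → List Bool
  | [] => []
  | false :: t => true :: dec1 t
  | true :: t => false :: t

lemma valL_dec1 (l : List Bool) (h : 0 < valL l) : valL (dec1 l) = valL l - 1 := by
  induction l with
  | nil => simp [valL] at h
  | cons b t ih =>
      cases b with
      | true => simp [dec1, valL]
      | false =>
          simp only [valL, cond] at h ⊢
          have ht : 0 < valL t := by omega
          simp [dec1, valL, ih ht]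
          omega

lemma dec1_length (l : List Bool) : (dec1 l).length = l.length := by
  induction l with
  | nil => rfl
  | cons b t ih => cases b <;> simp [dec1, ih]

/-- strip leading falses (msb side). -/
def stripF : List Bool → List Bool
  | [] => []
  | true :: t => true :: t
  | false :: t => stripF t

lemma stripF_eq_btoW (r : List Bool) : stripF r = btoW (bval r) := by
  induction r with
  | nil => simp [stripF, btoW, bval]
  | cons b t ih =>
      cases b with
      | false => rw [show stripF (false :: t) = stripF t from rfl, ih, bval_cons]; simp
      | true =>
          show true :: t = btoW (bval (true :: t))
          rw [btoW, bval_eq_valL_reverse]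
          have h : (true :: t).reverse = t.reverse ++ [true] := by simp
          rw [h, bitsL]
          simp

lemma valL_zero_iff (l : List Bool) : valL l = 0 ↔ ∀ b ∈ l, b = false := by
  induction l with
  | nil => simp [valL]
  | cons b t ih => cases b <;> simp [valL, ih]

lemma bval_pos_of_any (w : List Bool) (h : w.any id = true) : 0 < bval w := by
  rw [bval_eq_valL_reverse]
  rcases Nat.eq_zero_or_pos (valL w.reverse) with h0 | h0
  · rw [valL_zero_iff] at h0
    simp only [List.any_eq_true, id] at h
    obtain ⟨b, hb, hbt⟩ := h
    have := h0 b (by simpa using hb)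
    simp [this] at hbt
  · exact h0

lemma bval_zero_of_not_any (w : List Bool) (h : w.any id = false) : bval w = 0 := by
  rw [bval_eq_valL_reverse, valL_zero_iff]
  intro b hb
  simp only [List.any_eq_false, id] at h
  exact Bool.not_eq_true _ |>.mp (h b (by simpa using hb))

lemma dec_correct (w : List Bool) (h : 0 < bval w) :
    stripF (dec1 w.reverse).reverse = btoW (bval w - 1) := by
  rw [stripF_eq_btoW]
  congr 1
  rw [bval_eq_valL_reverse, List.reverse_reverse, valL_dec1, ← bval_eq_valL_reverse]
  rwa [← bval_eq_valL_reverse]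

lemma bval_lt (w : List Bool) : bval w < 2 ^ w.length := by
  induction w with
  | nil => simp [bval]
  | cons b t ih =>
      rw [bval_cons]
      have : (2:ℕ) ^ (b :: t).length = 2 ^ t.length + 2 ^ t.length := by
        simp [List.length_cons, pow_succ]; ring
      cases b <;> simp <;> omega

lemma btoW_length_le (n : ℕ) (k : ℕ) (h : n < 2 ^ k) : (btoW n).length ≤ k := by
  rw [btoW, List.length_reverse, Nat.size_eq_bits_len]
  exact Nat.size_le.mpr h

/-! #### Encoding lemmas -/

lemma tuple1_encode (a : Fin 1 → Word Bool) :
    (tupleEncoding Bool 1).encode a = (a 0).map some := by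
  show List.intercalate [none] (List.ofFn fun i => (a i).map some) = _
  simp [List.intercalate, List.ofFn_succ]

lemma tuple0_encode (a : Fin 0 → Word Bool) :
    (tupleEncoding Bool 0).encode a = [] := by
  show List.intercalate [none] (List.ofFn fun i => (a i).map some) = _
  simp [List.intercalate]

lemma word_encode (v : Word Bool) : (wordEncoding Bool).encode v = v := rfl

/-! #### The Turing machines -/

section TM

open Turing Turing.TM2.Stmt

/-- Stack names. -/
inductive K3 | inp | aux | out deriving DecidableEq

instance : Fintype K3 := ⟨{K3.inp, K3.aux, K3.out}, fun k => by cases k <;> simp⟩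

/-- Labels of the decrement machine. -/
inductive Λ4 | A | Z | B | C deriving DecidableEq

instance : Fintype Λ4 := ⟨{Λ4.A, Λ4.Z, Λ4.B, Λ4.C}, fun k => by cases k <;> simp⟩

/-- Stack alphabets. -/
abbrev Γd : K3 → Type
  | .inp => Option Bool
  | .aux => Bool
  | .out => Bool

/-- Internal states. -/
abbrev σd := Option Bool × Bool

/-- Bundle three stacks into one function. -/
def stk3 (i : List (Option Bool)) (a o : List Bool) : ∀ k : K3, List (Γd k)
  | .inp => i
  | .aux => a
  | .out => o

lemma upd_inp (i a o i') : Function.update (stk3 i a o) .inp i' = stk3 i' a o := by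
  funext k; cases k <;> simp [Function.update, stk3]
lemma upd_aux (i a o a') : Function.update (stk3 i a o) .aux a' = stk3 i a' o := by
  funext k; cases k <;> simp [Function.update, stk3]
lemma upd_out (i a o o') : Function.update (stk3 i a o) .out o' = stk3 i a o' := by
  funext k; cases k <;> simp [Function.update, stk3]

/-- The binary-decrement machine. -/
abbrev decM : FinTM2 where
  K := K3
  k₀ := .inp
  k₁ := .out
  Γ := Γd
  Λ := Λ4
  main := .A
  σ := σd
  initialState := (none, false)
  Γk₀Fin := inferInstanceAs (Fintype (Option Bool))
  m := fun l => match l with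
    | .A => pop .inp (fun s x => (x.bind id, s.2 || ((x.bind id).getD false)))
            (branch (fun s => s.1.isSome)
              (push .aux (fun s => s.1.getD false) (goto fun _ => .A))
              (branch (fun s => s.2)
                (load (fun _ => (none, true)) (goto fun _ => .B))
                (goto fun _ => .Z)))
    | .Z => pop .aux (fun s x => (x, s.2))
            (branch (fun s => s.1.isSome) (goto fun _ => .Z)
              (load (fun _ => (none, false)) halt))
    | .B => pop .aux (fun s x => (x, s.2))
            (branch (fun s => s.1.isSome)
              (push .out (fun s => if s.2 then !(s.1.getD false) else s.1.getD false)
                (load (fun s => (s.1, s.2 && !(s.1.getD false))) (goto fun _ => .B)))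
              (goto fun _ => .C))
    | .C => pop .out (fun s x => (x, s.2))
            (branch (fun s => s.1.getD false)
              (push .out (fun _ => true) (load (fun _ => (none, false)) halt))
              (branch (fun s => s.1.isSome) (goto fun _ => .C)
                (load (fun _ => (none, false)) halt)))

/-- Iterated step function of `decM`. -/
def itM : Option decM.Cfg → Option decM.Cfg := flip bind decM.step

/-- Configurations of `decM`. -/
abbrev mkc (l : Option Λ4) (s : σd) (i : List (Option Bool)) (a o : List Bool) : decM.Cfg :=
  ⟨l, s, stk3 i a o⟩

lemma it_some (c : decM.Cfg) (n : ℕ) : itM^[n+1] (some c) = itM^[n] (decM.step c) := by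
  rw [Function.iterate_succ_apply]; rfl

lemma stepA_cons (s : σd) (b : Bool) (i a o) :
    decM.step (mkc (some .A) s (some b :: i) a o)
      = some (mkc (some .A) (some b, s.2 || b) i (b :: a) o) := by
  show some _ = some _
  simp only [decM, FinTM2.step, TM2.step, TM2.stepAux]
  simp [stk3, upd_inp, upd_aux, mkc] <;> (congr 2; funext k; cases k <;> rfl)

lemma stepA_nil (s : σd) (a o) :
    decM.step (mkc (some .A) s [] a o)
      = some (if s.2 then mkc (some .B) (none, true) [] a o
              else mkc (some .Z) (none, s.2 || false) [] a o) := by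
  show some _ = some _
  simp only [decM, FinTM2.step, TM2.step, TM2.stepAux]
  cases s.2 <;> simp [stk3, upd_inp, mkc] <;> (congr 2; funext k; cases k <;> rfl)

lemma phaseA (w : List Bool) : ∀ (s : σd) (a o : List Bool),
    itM^[w.length + 1] (some (mkc (some .A) s (w.map some) a o))
      = some (if s.2 || w.any id
          then mkc (some .B) (none, true) [] (w.reverse ++ a) o
          else mkc (some .Z) (none, false) [] (w.reverse ++ a) o) := by
  induction w with
  | nil =>
      intro s a o
      rw [show ([] : List Bool).length + 1 = 1 from rfl, it_some,
        show (List.map some [] : List (Option Bool)) = [] from rfl, stepA_nil]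
      cases h : s.2 <;> simp [h, itM]
  | cons b t ih =>
      intro s a o
      rw [show (b :: t).length + 1 = (t.length + 1) + 1 by simp, it_some,
        show (b :: t).map some = some b :: t.map some from rfl, stepA_cons, ih]
      have hc : ((s.2 || b) || t.any id) = (s.2 || (b :: t).any id) := by
        simp [Bool.or_assoc]
      have hl : t.reverse ++ b :: a = (b :: t).reverse ++ a := by simp
      rw [hc, hl]

lemma stepZ_cons (p : Option Bool) (q : Bool) (b : Bool) (a o) :
    decM.step (mkc (some .Z) (p, q) [] (b :: a) o)
      = some (mkc (some .Z) (some b, q) [] a o) := by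
  show some _ = some _
  simp only [decM, FinTM2.step, TM2.step, TM2.stepAux]
  simp [stk3, upd_aux, mkc] <;> (congr 2; funext k; cases k <;> rfl)

lemma stepZ_nil (p : Option Bool) (q : Bool) (o) :
    decM.step (mkc (some .Z) (p, q) [] [] o)
      = some (mkc none (none, false) [] [] o) := by
  show some _ = some _
  simp only [decM, FinTM2.step, TM2.step, TM2.stepAux]
  simp [stk3, upd_aux, mkc] <;> (congr 2; funext k; cases k <;> rfl)

lemma phaseZ (a : List Bool) : ∀ (p : Option Bool) (q : Bool) (o : List Bool),
    itM^[a.length + 1] (some (mkc (some .Z) (p, q) [] a o))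
      = some (mkc none (none, false) [] [] o) := by
  induction a with
  | nil =>
      intro p q o
      rw [show ([]:List Bool).length + 1 = 1 from rfl, it_some, stepZ_nil]; rfl
  | cons b t ih =>
      intro p q o
      rw [show (b :: t).length + 1 = (t.length + 1) + 1 by simp, it_some, stepZ_cons, ih]

/-- What phase B pushes onto the output stack. -/
def pbOut : Bool → List Bool → List Bool
  | _, [] => []
  | mode, b :: t => pbOut (mode && !b) t ++ [if mode then !b else b]

lemma stepB_cons (p : Option Bool) (mode : Bool) (b : Bool) (a o) :
    decM.step (mkc (some .B) (p, mode) [] (b :: a) o)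
      = some (mkc (some .B) (some b, mode && !b) [] a ((if mode then !b else b) :: o)) := by
  show some _ = some _
  simp only [decM, FinTM2.step, TM2.step, TM2.stepAux]
  simp [stk3, upd_aux, upd_out, mkc] <;> (congr 2; funext k; cases k <;> rfl)

lemma stepB_nil (p : Option Bool) (mode : Bool) (o) :
    decM.step (mkc (some .B) (p, mode) [] [] o)
      = some (mkc (some .C) (none, mode) [] [] o) := by
  show some _ = some _
  simp only [decM, FinTM2.step, TM2.step, TM2.stepAux]
  simp [stk3, upd_aux, mkc] <;> (congr 2; funext k; cases k <;> rfl)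

lemma phaseB (a : List Bool) : ∀ (p : Option Bool) (mode : Bool) (o : List Bool), ∃ q : Bool,
    itM^[a.length + 1] (some (mkc (some .B) (p, mode) [] a o))
      = some (mkc (some .C) (none, q) [] [] (pbOut mode a ++ o)) := by
  induction a with
  | nil =>
      intro p mode o
      exact ⟨mode, by
        rw [show ([]:List Bool).length + 1 = 1 from rfl, it_some, stepB_nil]; rfl⟩
  | cons b t ih =>
      intro p mode o
      obtain ⟨q, hq⟩ := ih (some b) (mode && !b) ((if mode then !b else b) :: o)
      refine ⟨q, ?_⟩
      rw [show (b :: t).length + 1 = (t.length + 1) + 1 by simp, it_some, stepB_cons, hq]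
      simp [pbOut]

/-- Step count of phase C. -/
def stepsC : List Bool → ℕ
  | [] => 1
  | true :: _ => 1
  | false :: t => stepsC t + 1

lemma stepsC_le (o : List Bool) : stepsC o ≤ o.length + 1 := by
  induction o with
  | nil => simp [stepsC]
  | cons b t ih => cases b <;> simp [stepsC] <;> omega

lemma stepC_nil (p : Option Bool) (q : Bool) :
    decM.step (mkc (some .C) (p, q) [] [] [])
      = some (mkc none (none, false) [] [] []) := by
  show some _ = some _
  simp only [decM, FinTM2.step, TM2.step, TM2.stepAux]
  simp [stk3, upd_out, mkc] <;> (congr 2; funext k; cases k <;> rfl)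

lemma stepC_true (p : Option Bool) (q : Bool) (t : List Bool) :
    decM.step (mkc (some .C) (p, q) [] [] (true :: t))
      = some (mkc none (none, false) [] [] (true :: t)) := by
  show some _ = some _
  simp only [decM, FinTM2.step, TM2.step, TM2.stepAux]
  simp [stk3, upd_out, mkc] <;> (congr 2; funext k; cases k <;> rfl)

lemma stepC_false (p : Option Bool) (q : Bool) (t : List Bool) :
    decM.step (mkc (some .C) (p, q) [] [] (false :: t))
      = some (mkc (some .C) (some false, q) [] [] t) := by
  show some _ = some _
  simp only [decM, FinTM2.step, TM2.step, TM2.stepAux]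
  simp [stk3, upd_out, mkc] <;> (congr 2; funext k; cases k <;> rfl)

lemma phaseC (o : List Bool) : ∀ (p : Option Bool) (q : Bool),
    itM^[stepsC o] (some (mkc (some .C) (p, q) [] [] o))
      = some (mkc none (none, false) [] [] (stripF o)) := by
  induction o with
  | nil => intro p q; rw [show stepsC [] = 1 from rfl, it_some, stepC_nil]; rfl
  | cons b t ih =>
      intro p q
      cases b with
      | true => rw [show stepsC (true :: t) = 1 from rfl, it_some, stepC_true]; rfl
      | false =>
          rw [show stepsC (false :: t) = stepsC t + 1 from rfl, it_some, stepC_false, ih]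
          rfl

lemma pbOut_false (l : List Bool) : pbOut false l = l.reverse := by
  induction l with
  | nil => rfl
  | cons b t ih => simp [pbOut, ih]

lemma pbOut_true (l : List Bool) : pbOut true l = (dec1 l).reverse := by
  induction l with
  | nil => rfl
  | cons b t ih =>
      cases b with
      | false => simp [pbOut, dec1, ih]
      | true => simp [pbOut, dec1, pbOut_false]

lemma initC (l : List (Option Bool)) :
    Turing.initList decM l = mkc (some .A) (none, false) l [] [] := by
  unfold Turing.initList mkc
  congr
  funext k; cases k <;> rfl

lemma haltC (o : List Bool) :
    Turing.haltList decM o = mkc none (none, false) [] [] o := by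
  unfold Turing.haltList mkc
  congr
  funext k; cases k <;> rfl

/-- Exact number of steps of the decrement machine. -/
def decSteps (w : List Bool) : ℕ :=
  if w.any id then stepsC ((dec1 w.reverse).reverse) + ((w.length + 1) + (w.length + 1))
  else (w.length + 1) + (w.length + 1)

lemma decSteps_le (w : List Bool) : decSteps w ≤ 3 * w.length + 3 := by
  unfold decSteps
  split
  · have h1 := stepsC_le ((dec1 w.reverse).reverse)
    have h2 : ((dec1 w.reverse).reverse).length = w.length := by simp [dec1_length]
    omega
  · omega

lemma decM_run (w : List Bool) :
    itM^[decSteps w] (some (Turing.initList decM (w.map some)))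
      = some (Turing.haltList decM (btoW (bval w - 1))) := by
  rw [initC, haltC]
  cases h : w.any id with
  | false =>
      rw [show decSteps w = (w.length + 1) + (w.length + 1) by simp [decSteps, h]]
      rw [Function.iterate_add_apply, phaseA, if_neg (by simp [h]),
        show (w.reverse ++ [] : List Bool) = w.reverse by simp]
      rw [show w.length = w.reverse.length by simp]
      rw [phaseZ]
      rw [bval_zero_of_not_any w h,
        show btoW (0 - 1) = [] by simp [btoW, Nat.zero_bits]]
  | true =>
      have hout : pbOut true w.reverse ++ [] = (dec1 w.reverse).reverse := by
        simp [pbOut_true]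
      obtain ⟨q, hq⟩ := phaseB w.reverse none true []
      rw [show decSteps w
          = stepsC ((dec1 w.reverse).reverse) + ((w.length + 1) + (w.length + 1)) by
        simp [decSteps, h]]
      rw [Function.iterate_add_apply, Function.iterate_add_apply, phaseA,
          if_pos (by simp [h]), show (w.reverse ++ [] : List Bool) = w.reverse by simp]
      rw [show w.length + 1 = w.reverse.length + 1 by simp, hq, hout, phaseC,
        dec_correct w (bval_pos_of_any w h)]

section TM2more

open Turing Turing.TM2.Stmt

/-- The positivity-test machine. -/
abbrev gtM : FinTM2 where
  K := K3
  k₀ := .inp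
  k₁ := .out
  Γ := Γd
  Λ := Unit
  main := ()
  σ := σd
  initialState := (none, false)
  Γk₀Fin := inferInstanceAs (Fintype (Option Bool))
  m := fun _ =>
    pop .inp (fun s x => (x.bind id, s.2 || ((x.bind id).getD false)))
      (branch (fun s => s.1.isSome) (goto fun _ => ())
        (push .out (fun s => s.2) (load (fun _ => (none, false)) halt)))

/-- Iterated step function of `gtM`. -/
def itG : Option gtM.Cfg → Option gtM.Cfg := flip bind gtM.step

/-- Configurations of `gtM`. -/
abbrev gkc (l : Option Unit) (s : σd) (i : List (Option Bool)) (a o : List Bool) : gtM.Cfg :=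
  ⟨l, s, stk3 i a o⟩

lemma itG_some (c : gtM.Cfg) (n : ℕ) : itG^[n+1] (some c) = itG^[n] (gtM.step c) := by
  rw [Function.iterate_succ_apply]; rfl

lemma stepG_cons (s : σd) (b : Bool) (i a o) :
    gtM.step (gkc (some ()) s (some b :: i) a o)
      = some (gkc (some ()) (some b, s.2 || b) i a o) := by
  show some _ = some _
  simp only [gtM, FinTM2.step, TM2.step, TM2.stepAux]
  simp [stk3, upd_inp, gkc] <;> (congr 2; funext k; cases k <;> rfl)

lemma stepG_nil (s : σd) (a o) :
    gtM.step (gkc (some ()) s [] a o)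
      = some (gkc none (none, false) [] a (s.2 :: o)) := by
  show some _ = some _
  simp only [gtM, FinTM2.step, TM2.step, TM2.stepAux]
  simp [stk3, upd_inp, upd_out, gkc] <;> (congr 2; funext k; cases k <;> rfl)

lemma phaseG (w : List Bool) : ∀ (s : σd) (a o : List Bool),
    itG^[w.length + 1] (some (gkc (some ()) s (w.map some) a o))
      = some (gkc none (none, false) [] a ((s.2 || w.any id) :: o)) := by
  induction w with
  | nil =>
      intro s a o
      rw [show ([] : List Bool).length + 1 = 1 from rfl, itG_some,
        show (List.map some [] : List (Option Bool)) = [] from rfl, stepG_nil]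
      simp [itG]
  | cons b t ih =>
      intro s a o
      rw [show (b :: t).length + 1 = (t.length + 1) + 1 by simp, itG_some,
        show (b :: t).map some = some b :: t.map some from rfl, stepG_cons, ih]
      have hc : ((s.2 || b) || t.any id) = (s.2 || (b :: t).any id) := by
        simp [Bool.or_assoc]
      rw [hc]

lemma initG (l : List (Option Bool)) :
    Turing.initList gtM l = gkc (some ()) (none, false) l [] [] := by
  unfold Turing.initList gkc
  congr
  funext k; cases k <;> rfl

lemma haltG (o : List Bool) :
    Turing.haltList gtM o = gkc none (none, false) [] [] o := by
  unfold Turing.haltList gkc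
  congr
  funext k; cases k <;> rfl

lemma gtM_run (w : List Bool) :
    itG^[w.length + 1] (some (Turing.initList gtM (w.map some)))
      = some (Turing.haltList gtM [w.any id]) := by
  rw [initG, haltG, phaseG]
  rfl

/-- The constant-true machine. -/
abbrev trueM : FinTM2 where
  K := K3
  k₀ := .inp
  k₁ := .out
  Γ := Γd
  Λ := Unit
  main := ()
  σ := σd
  initialState := (none, false)
  Γk₀Fin := inferInstanceAs (Fintype (Option Bool))
  m := fun _ => push .out (fun _ => true) halt

lemma trueM_run :
    (flip bind trueM.step)^[1] (some (Turing.initList trueM []))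
      = some (Turing.haltList trueM [true]) := by
  have h1 : Turing.initList trueM ([] : List (Option Bool))
      = (⟨some (), (none, false), stk3 [] [] []⟩ : trueM.Cfg) := by
    unfold Turing.initList
    congr
    funext k; cases k <;> rfl
  have h2 : Turing.haltList trueM ([true] : List Bool)
      = (⟨none, (none, false), stk3 [] [] [true]⟩ : trueM.Cfg) := by
    unfold Turing.haltList
    congr
    funext k; cases k <;> rfl
  rw [h1, h2, Function.iterate_succ_apply, Function.iterate_zero_apply]
  have h3 : flip bind trueM.step (some (⟨some (), (none, false), stk3 [] [] []⟩ : trueM.Cfg))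
      = trueM.step ⟨some (), (none, false), stk3 [] [] []⟩ := rfl
  rw [h3]
  show some _ = some _
  simp only [trueM, FinTM2.step, TM2.step, TM2.stepAux]
  simp [stk3, upd_out] <;> (congr 2; funext k; cases k <;> rfl)

end TM2more

end TM
section FP

lemma decB_FP' (f : (Fin 1 → Word Bool) → Word Bool)
    (hf : ∀ a, f a = btoW (bval (a 0) - 1)) :
    Nonempty (Turing.TM2ComputableInPolyTime (tupleEncoding Bool 1).encode (wordEncoding Bool).encode f) := by
  refine ⟨{ tm := decM
            inputAlphabet := Equiv.refl (Option Bool)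
            outputAlphabet := Equiv.refl Bool
            time := 3 * Polynomial.X + 3
            outputsFun := fun a => ?_ }⟩
  have hin : List.map (Equiv.refl (Option Bool)).invFun ((tupleEncoding Bool 1).encode a)
      = (a 0).map some := by rw [tuple1_encode]; simp
  have hout : List.map (Equiv.refl Bool).invFun ((wordEncoding Bool).encode (f a))
      = btoW (bval (a 0) - 1) := by rw [word_encode, hf]; simp
  have hlen : ((tupleEncoding Bool 1).encode a).length = (a 0).length := by
    rw [tuple1_encode]; simp
  refine ⟨⟨decSteps (a 0), ?_⟩, ?_⟩
  · rw [hin, hout]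
    exact decM_run (a 0)
  · rw [hlen]
    have : Polynomial.eval (a 0).length (3 * Polynomial.X + 3 : Polynomial ℕ)
        = 3 * (a 0).length + 3 := by simp
    rw [this]
    exact decSteps_le (a 0)

lemma decB_FP : InFP (sig2.sem Op2.decB) :=
  decB_FP' _ (fun a => by
    show btoW (bval (a ⟨0, by decide⟩) - 1) = _
    congr 3)

lemma gt0B_FP' (f : (Fin 1 → Word Bool) → Word Bool)
    (hf : ∀ a, f a = (if 0 < bval (a 0) then [true] else [false])) :
    Nonempty (Turing.TM2ComputableInPolyTime (tupleEncoding Bool 1).encode (wordEncoding Bool).encode f) := by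
  refine ⟨{ tm := gtM
            inputAlphabet := Equiv.refl (Option Bool)
            outputAlphabet := Equiv.refl Bool
            time := Polynomial.X + 1
            outputsFun := fun a => ?_ }⟩
  have hin : List.map (Equiv.refl (Option Bool)).invFun ((tupleEncoding Bool 1).encode a)
      = (a 0).map some := by rw [tuple1_encode]; simp
  have hfa : f a = [(a 0).any id] := by
    rw [hf]
    cases h : (a 0).any id with
    | false => rw [if_neg]; rw [bval_zero_of_not_any _ h]; omega
    | true => rw [if_pos (bval_pos_of_any _ h)]
  have hout : List.map (Equiv.refl Bool).invFun ((wordEncoding Bool).encode (f a))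
      = [(a 0).any id] := by rw [word_encode, hfa]; simp
  have hlen : ((tupleEncoding Bool 1).encode a).length = (a 0).length := by
    rw [tuple1_encode]; simp
  refine ⟨⟨(a 0).length + 1, ?_⟩, ?_⟩
  · rw [hin, hout]
    exact gtM_run (a 0)
  · rw [hlen]
    have : Polynomial.eval (a 0).length (Polynomial.X + 1 : Polynomial ℕ)
        = (a 0).length + 1 := by simp
    rw [this]

lemma gt0B_FP : InFP (sig2.sem Op2.gt0B) :=
  gt0B_FP' _ (fun a => by
    show (if 0 < bval (a ⟨0, by decide⟩) then [true] else [false]) = _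
    congr 3)

lemma trueC_FP' (f : (Fin 0 → Word Bool) → Word Bool)
    (hf : ∀ a, f a = [true]) :
    Nonempty (Turing.TM2ComputableInPolyTime (tupleEncoding Bool 0).encode (wordEncoding Bool).encode f) := by
  refine ⟨{ tm := trueM
            inputAlphabet := Equiv.refl (Option Bool)
            outputAlphabet := Equiv.refl Bool
            time := 1
            outputsFun := fun a => ?_ }⟩
  have hin : List.map (Equiv.refl (Option Bool)).invFun ((tupleEncoding Bool 0).encode a)
      = [] := by rw [tuple0_encode]; simp
  have hout : List.map (Equiv.refl Bool).invFun ((wordEncoding Bool).encode (f a))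
      = [true] := by rw [word_encode, hf]; simp
  refine ⟨⟨1, ?_⟩, ?_⟩
  · rw [hin, hout]
    exact trueM_run
  · simp

lemma trueC_FP : InFP (sig2.sem Op2.trueC) := trueC_FP' _ (fun _ => rfl)

end FP

section Safety

/-- The operator typing environment for Listing 2. -/
def Δ₂ : OpEnv sig2 := fun o =>
  match o with
  | .trueC => fun _ _ => Set.univ
  | .decB => fun τin _ => {τs | (∀ i : Fin (sig2.ar Op2.decB), τs (Fin.last _) ≤ τs i.castSucc)
      ∧ (τs (Fin.last _) < τin ∨ τs (Fin.last _) = 0)}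
  | .gt0B => fun _ _ => {τs | ∀ i : Fin (sig2.ar Op2.gt0B), τs (Fin.last _) ≤ τs i.castSucc}

lemma neutral_trueC : NeutralOp false true sig2 Op2.trueC :=
  Or.inl (fun _ => Or.inr rfl)

lemma neutral_gt0B : NeutralOp false true sig2 Op2.gt0B := by
  refine Or.inl (fun ws => ?_)
  show ((if 0 < bval (ws ⟨0, by decide⟩) then [true] else [false]) = [false])
    ∨ ((if 0 < bval (ws ⟨0, by decide⟩) then [true] else [false]) = [true])
  split
  · exact Or.inr rfl
  · exact Or.inl rfl

lemma positive_trueC : PositiveOp sig2 Op2.trueC :=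
  ⟨1, fun ws => by show ([true] : Word Bool).length ≤ maxSize ws + 1; simp⟩

lemma positive_gt0B : PositiveOp sig2 Op2.gt0B := by
  refine ⟨1, fun ws => ?_⟩
  show (if 0 < bval (ws ⟨0, by decide⟩) then ([true] : Word Bool) else [false]).length
      ≤ maxSize ws + 1
  split <;> simp

lemma positive_decB : PositiveOp sig2 Op2.decB := by
  refine ⟨0, fun ws => ?_⟩
  show (btoW (bval (ws ⟨0, by decide⟩) - 1)).length ≤ maxSize ws + 0
  have h1 : (ws ⟨0, by decide⟩).length ≤ maxSize ws :=
    Finset.le_sup (f := fun i => (ws i).length) (Finset.mem_univ _)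
  have h2 := bval_lt (ws ⟨0, by decide⟩)
  have h3 := btoW_length_le (bval (ws ⟨0, by decide⟩) - 1) (ws ⟨0, by decide⟩).length
    (lt_of_le_of_lt (Nat.sub_le _ _) h2)
  omega

lemma safe_Δ₂ : SafeOpEnv false true Δ₂ := by
  intro o
  cases o with
  | trueC =>
      refine ⟨Or.inl neutral_trueC, trueC_FP, ?_⟩
      intro τin τout τs _
      exact ⟨fun _ i => i.elim0, fun h => absurd neutral_trueC h.2,
        fun h => absurd positive_trueC h.2⟩
  | decB =>
      refine ⟨Or.inr (Or.inl positive_decB), decB_FP, ?_⟩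
      intro τin τout τs hm
      exact ⟨fun _ => hm.1, fun _ => ⟨hm.1, hm.2⟩, fun h => absurd positive_decB h.2⟩
  | gt0B =>
      refine ⟨Or.inl neutral_gt0B, gt0B_FP, ?_⟩
      intro τin τout τs hm
      exact ⟨fun _ => hm, fun h => absurd neutral_gt0B h.2,
        fun h => absurd positive_gt0B h.2⟩

lemma typs_body : TypS Γ₂ Δ₂ 0 0 expBody₂ 1 := by
  have hA : TypS Γ₂ Δ₂ 0 0 (.assign 0 (.op .trueC ![])) 1 := by
    have he : TypE Γ₂ Δ₂ 0 0 (Expr.op Op2.trueC ![]) 1 :=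
      TypE.op (Γ := Γ₂) (Δ := Δ₂) 0 0 Op2.trueC ![] (fun _ => 1) (Set.mem_univ _) (fun i => i.elim0)
    exact TypS.assign 0 0 0 _ 1 he (Or.inl rfl)
  have hvar : TypE Γ₂ Δ₂ 1 1 (Expr.var 0) 1 := TypE.var 1 1 0
  have hd : TypE Γ₂ Δ₂ 1 1 (Expr.op Op2.decB ![Expr.var 1]) 0 := by
    refine TypE.op (Γ := Γ₂) (Δ := Δ₂) 1 1 Op2.decB ![Expr.var 1] (fun _ => 0)
      (by exact ⟨fun _ => le_refl 0, Or.inr rfl⟩) ?_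
    intro i
    fin_cases i
    exact TypE.var 1 1 1
  have hs1 : TypS Γ₂ Δ₂ 1 1 (.assign 1 (.op .decB ![.var 1])) 1 :=
    TypS.sub 1 1 _ 0 1 (TypS.assign 1 1 1 _ 0 hd (Or.inr (le_refl 0))) (by omega)
  have hg : TypE Γ₂ Δ₂ 1 1 (Expr.op Op2.gt0B ![Expr.var 1]) 0 := by
    refine TypE.op (Γ := Γ₂) (Δ := Δ₂) 1 1 Op2.gt0B ![Expr.var 1] (fun _ => 0)
      (by exact fun _ => le_refl 0) ?_
    intro i
    fin_cases i
    exact TypE.var 1 1 1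
  have hdc : TypE Γ₂ Δ₂ 1 1 (.declass (.op .gt0B ![.var 1])) 1 :=
    TypE.declass 1 1 _ 0 1 hg (by omega) (le_refl 1)
  have hs2 : TypS Γ₂ Δ₂ 1 1 (.assign 0 (.declass (.op .gt0B ![.var 1]))) 1 :=
    TypS.assign 1 1 0 _ 1 hdc (Or.inr (le_refl 1))
  have hw : TypS Γ₂ Δ₂ 0 0
      (.whileLoop (.var 0) (.seq (.assign 1 (.op .decB ![.var 1]))
        (.assign 0 (.declass (.op .gt0B ![.var 1]))))) 1 :=
    TypS.whileInit _ _ 1 hvar (TypS.seq 1 1 _ _ 1 hs1 hs2) (le_refl 1)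
  exact TypS.seq 0 0 _ _ 1 hA hw

end Safety

section Counterexample

/-- The loop body of Listing 2. -/
def loopB : Stmt sig2 :=
  .seq (.assign 1 (.op .decB ![.var 1])) (.assign 0 (.declass (.op .gt0B ![.var 1])))

/-- The initial store, binding `y` to the numeral `10` (two). -/
def μs0 : Store Bool := Function.update (fun _ => []) 1 [true, false]
/-- After `x := true`. -/
def μs1 : Store Bool := Function.update μs0 0 [true]
/-- After the first `y := y−1`. -/
def μsa : Store Bool := Function.update μs1 1 [true]
/-- After the first loop iteration. -/
def μs2 : Store Bool := Function.update μsa 0 [true]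

lemma evalA : EvalS (O := sig2) true μs0 (.assign 0 (.op .trueC ![])) (true, μs1) :=
  EvalS.assign μs0 0 _ [true] (EvalE.op (O := sig2) μs0 Op2.trueC ![] (fun i => i.elim0) (fun i => i.elim0))

lemma evalGuard : EvalE (O := sig2) true μs1 (.var 0) [true] := EvalE.var μs1 0

lemma evalDec : EvalE (O := sig2) true μs1 (Expr.op Op2.decB ![Expr.var 1]) [true] := by
  have hsem : sig2.sem Op2.decB (fun _ => [true, false]) = [true] := by
    show btoW (bval ((fun _ : Fin 1 => ([true, false] : Word Bool)) ⟨0, by decide⟩) - 1) = [true]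
    have h1 : bval ((fun _ : Fin 1 => ([true, false] : Word Bool)) ⟨0, by decide⟩) = 2 := rfl
    rw [h1, show (2 : ℕ) - 1 = 1 by omega, btoW, Nat.one_bits]
    rfl
  have hargs : ∀ i : Fin 1, EvalE true μs1 ((![Expr.var 1] : Fin 1 → Expr sig2) i)
      ((fun _ : Fin 1 => ([true, false] : Word Bool)) i) := by
    intro i
    fin_cases i
    exact EvalE.var μs1 1
  have h := EvalE.op (one := true) (O := sig2) μs1 Op2.decB ![Expr.var 1]
    (fun _ => [true, false]) hargs
  rwa [hsem] at h

lemma evalGt : EvalE (O := sig2) true μsa (.declass (Expr.op Op2.gt0B ![Expr.var 1])) [true] := by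
  have hargs : ∀ i : Fin 1, EvalE true μsa ((![Expr.var 1] : Fin 1 → Expr sig2) i)
      ((fun _ : Fin 1 => ([true] : Word Bool)) i) := by
    intro i
    fin_cases i
    exact EvalE.var μsa 1
  have h := EvalE.op (one := true) (O := sig2) μsa Op2.gt0B ![Expr.var 1] (fun _ => [true]) hargs
  exact EvalE.declass μsa _ [true] h

lemma evalB : EvalS (O := sig2) true μs1 loopB (true, μs2) :=
  EvalS.seq_top μs1 μsa (true, μs2) _ _
    (EvalS.assign μs1 1 _ [true] evalDec)
    (EvalS.assign μsa 0 _ [true] evalGt)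

lemma notNoRepeat :
    ¬ NoRepeat true expBody₂ (Function.update (fun _ => ([] : Word Bool)) 1 [true, false]) := by
  intro h
  apply h
  refine ⟨.var 0, loopB, μs1, μs2, ?_, ?_, ?_⟩
  · exact Relation.ReflTransGen.single
      (SubConf.seq_right μs0 μs1 _ (.whileLoop (.var 0) loopB) evalA)
  · exact Relation.TransGen.head
      (SubConf.while_true μs1 (.var 0) loopB evalGuard)
      (Relation.TransGen.single
        (SubConf.seq_right μs1 μs2 loopB (.whileLoop (.var 0) loopB) evalB))
  · intro x hx
    have hx0 : x = 0 := hx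
    subst hx0
    rfl

end Counterexample

end Aux

/-- **Listing 2 is safe but not aperiodic**: `P₂` is `Δ`-safe for the variable
typing environment `Γ₂` (with `Γ(x) = 1`, `Γ(y) = 0`) and a suitable safe
operator typing environment `Δ`, but it is not aperiodic: on some input store,
the while loop is evaluated under two guard-equivalent stores, one within the
evaluation subtree of the other. -/
theorem listing2_safe_not_aperiodic :
    (∃ Δ : OpEnv sig2, SafeOpEnv false true Δ ∧
      ∃ τ : ℕ, TypS Γ₂ Δ 0 0 expBody₂ τ) ∧
    ∃ w : Word Bool,
      ¬ NoRepeat true expBody₂ (Function.update (fun _ => []) 1 w) :=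
  ⟨⟨Δ₂, safe_Δ₂, 1, typs_body⟩, [true, false], notNoRepeat⟩

end Declass
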